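/- Let $r \in (1,2]$ and let $X_1, \dots, X_n$ be independent real random variables with $\mathbb{E}[X_j] = 0$ and $\mathbb{E}|X_j|^r < \infty$. Then $\mathbb{E}\left|\sum_{j=1}^n X_j\right|^r \le 2 \sum_{j=1}^n \mathbb{E}|X_j|^r$. -/

import Mathlib

open MeasureTheory ProbabilityTheory Finset Filter

noncomputable def vbePsi (s : ℝ) (x : ℝ) : ℝ := x * |x| ^ (s - 1)

lemma rpow_split {x : ℝ} (hx : 0 < x) (s : ℝ) : x ^ s = x * x ^ (s - 1) := by
  have h : x ^ (1 + (s - 1)) = x * x ^ (s - 1) := by rw [Real.rpow_add hx, Real.rpow_one]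
  simpa [show 1 + (s - 1) = s by ring] using h

lemma vbePsi_abs {s : ℝ} (hs : 0 < s) (x : ℝ) : |vbePsi s x| = |x| ^ s := by
  rcases eq_or_ne x 0 with rfl | hx
  · simp [vbePsi, Real.zero_rpow hs.ne']
  · have hx' : 0 < |x| := abs_pos.2 hx
    rw [vbePsi, abs_mul, abs_of_nonneg (Real.rpow_nonneg hx'.le _)]
    exact (rpow_split hx' s).symm

lemma vbePsi_of_nonneg {s : ℝ} (hs : 0 < s) {x : ℝ} (hx : 0 ≤ x) :
    vbePsi s x = x ^ s := by
  rcases hx.eq_or_lt with rfl | hx'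
  · simp [vbePsi, Real.zero_rpow hs.ne']
  · rw [vbePsi, abs_of_pos hx']
    exact (rpow_split hx' s).symm

lemma vbePsi_neg (s x : ℝ) : vbePsi s (-x) = - vbePsi s x := by
  simp [vbePsi, abs_neg, neg_mul]

lemma vbePsi_eq_neg {s : ℝ} (hs : 0 < s) {x : ℝ} (hx : x ≤ 0) :
    vbePsi s x = -((-x) ^ s) := by
  rw [← vbePsi_of_nonneg hs (neg_nonneg.2 hx), vbePsi_neg, neg_neg]

lemma vbePsi_mono {s : ℝ} (hs : 0 < s) : Monotone (vbePsi s) := by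
  intro y x hyx
  rcases le_total 0 y with hy | hy
  · rw [vbePsi_of_nonneg hs hy, vbePsi_of_nonneg hs (hy.trans hyx)]
    exact Real.rpow_le_rpow hy hyx hs.le
  · rcases le_total 0 x with hx | hx
    · rw [vbePsi_of_nonneg hs hx, vbePsi_eq_neg hs hy]
      have h1 : 0 ≤ (-y) ^ s := Real.rpow_nonneg (neg_nonneg.2 hy) s
      have h2 : 0 ≤ x ^ s := Real.rpow_nonneg hx s
      linarith
    · rw [vbePsi_eq_neg hs hy, vbePsi_eq_neg hs hx]
      have h := Real.rpow_le_rpow (neg_nonneg.2 hx) (neg_le_neg hyx) hs.le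
      linarith

lemma real_rpow_add_le {s a b : ℝ} (hs0 : 0 ≤ s) (hs1 : s ≤ 1) (ha : 0 ≤ a) (hb : 0 ≤ b) :
    (a + b) ^ s ≤ a ^ s + b ^ s := by
  have h := NNReal.rpow_add_le_add_rpow (⟨a, ha⟩ : NNReal) (⟨b, hb⟩ : NNReal) hs0 hs1
  have h2 := NNReal.coe_le_coe.2 h
  push_cast at h2
  exact h2

lemma vbePsi_sub_le_nonneg {s : ℝ} (hs0 : 0 < s) (hs1 : s ≤ 1) {y x : ℝ}
    (hy : 0 ≤ y) (hyx : y ≤ x) :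
    vbePsi s x - vbePsi s y ≤ 2 * (x - y) ^ s := by
  have hx : 0 ≤ x := hy.trans hyx
  rw [vbePsi_of_nonneg hs0 hx, vbePsi_of_nonneg hs0 hy]
  have h1 : x ^ s ≤ y ^ s + (x - y) ^ s := by
    have := real_rpow_add_le hs0.le hs1 hy (sub_nonneg.2 hyx)
    simpa using this
  have h2 : 0 ≤ (x - y) ^ s := Real.rpow_nonneg (sub_nonneg.2 hyx) s
  linarith

lemma vbePsi_sub_le {s : ℝ} (hs0 : 0 < s) (hs1 : s ≤ 1) {y x : ℝ} (hyx : y ≤ x) :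
    vbePsi s x - vbePsi s y ≤ 2 * (x - y) ^ s := by
  rcases le_total 0 y with hy | hy
  · exact vbePsi_sub_le_nonneg hs0 hs1 hy hyx
  · rcases le_total x 0 with hx | hx
    · have h := vbePsi_sub_le_nonneg hs0 hs1 (neg_nonneg.2 hx) (neg_le_neg hyx)
      rw [vbePsi_neg, vbePsi_neg] at h
      rw [show -y - -x = x - y by ring] at h
      linarith
    · have h1 : vbePsi s x = x ^ s := vbePsi_of_nonneg hs0 hx
      have h2 : vbePsi s y = -((-y) ^ s) := vbePsi_eq_neg hs0 hy
      have h3 : x ^ s ≤ (x - y) ^ s := Real.rpow_le_rpow hx (by linarith) hs0.le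
      have h4 : (-y) ^ s ≤ (x - y) ^ s :=
        Real.rpow_le_rpow (neg_nonneg.2 hy) (by linarith) hs0.le
      rw [h1, h2]
      linarith

lemma vbePsi_holder {s : ℝ} (hs0 : 0 < s) (hs1 : s ≤ 1) (x y : ℝ) :
    |vbePsi s x - vbePsi s y| ≤ 2 * |x - y| ^ s := by
  rcases le_total y x with h | h
  · rw [abs_of_nonneg (sub_nonneg.2 (vbePsi_mono hs0 h)), abs_of_nonneg (sub_nonneg.2 h)]
    exact vbePsi_sub_le hs0 hs1 h
  · rw [abs_sub_comm, abs_sub_comm x y,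
      abs_of_nonneg (sub_nonneg.2 (vbePsi_mono hs0 h)), abs_of_nonneg (sub_nonneg.2 h)]
    exact vbePsi_sub_le hs0 hs1 h
lemma vbe_hasDerivAt {r : ℝ} (hr : 1 < r) (x : ℝ) :
    HasDerivAt (fun y : ℝ => |y| ^ r) (r * vbePsi (r - 1) x) x := by
  have h := hasDerivAt_abs_rpow x hr
  convert h using 1
  rw [vbePsi, show r - 1 - 1 = r - 2 by ring]
  ring
lemma vbe_pointwise {r : ℝ} (hr1 : 1 < r) (hr2 : r ≤ 2) (a b : ℝ) :
    |a + b| ^ r ≤ |a| ^ r + r * vbePsi (r - 1) a * b + 2 * |b| ^ r := by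
  have hr0 : (0 : ℝ) < r := by linarith
  have hs0 : (0 : ℝ) < r - 1 := by linarith
  have hs1 : r - 1 ≤ 1 := by linarith
  rcases eq_or_ne b 0 with rfl | hb
  · simp [Real.zero_rpow hr0.ne']
  have hb' : 0 < |b| := abs_pos.2 hb
  set C : ℝ := r * vbePsi (r - 1) a * b with hC
  set F : ℝ → ℝ := fun t => |a + t * b| ^ r - t * C - t ^ r * (2 * |b| ^ r) with hF
  have hderiv : ∀ t ∈ Set.Ioo (0 : ℝ) 1, HasDerivAt F
      (r * vbePsi (r - 1) (a + t * b) * b - C - r * t ^ (r - 1) * (2 * |b| ^ r)) t := by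
    intro t ht
    have h1 : HasDerivAt (fun t : ℝ => a + t * b) b t := by
      simpa using (hasDerivAt_mul_const b).const_add a (x := t)
    have h2 : HasDerivAt (fun t : ℝ => |a + t * b| ^ r) (r * vbePsi (r - 1) (a + t * b) * b) t :=
      by have := (vbe_hasDerivAt hr1 (a + t * b)).comp t h1; exact this
    have h3 : HasDerivAt (fun t : ℝ => t * C) C t := hasDerivAt_mul_const C
    have h4 : HasDerivAt (fun t : ℝ => t ^ r * (2 * |b| ^ r))
        (r * t ^ (r - 1) * (2 * |b| ^ r)) t :=
      (Real.hasDerivAt_rpow_const (Or.inl (ne_of_gt ht.1))).mul_const _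
    exact (h2.sub h3).sub h4
  have hmono : AntitoneOn F (Set.Icc 0 1) := by
    apply antitoneOn_of_deriv_nonpos (convex_Icc 0 1)
    · have c1 : Continuous fun t : ℝ => |a + t * b| ^ r :=
        (Real.continuous_rpow_const hr0.le).comp
          ((continuous_const.add (continuous_id.mul continuous_const)).abs)
      have c2 : Continuous fun t : ℝ => t ^ r := Real.continuous_rpow_const hr0.le
      exact ((c1.sub (continuous_id.mul continuous_const)).sub
        (c2.mul continuous_const)).continuousOn
    · intro t ht
      rw [interior_Icc] at ht
      exact (hderiv t ht).differentiableAt.differentiableWithinAt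
    · intro t ht
      rw [interior_Icc] at ht
      rw [(hderiv t ht).deriv]
      have key := vbePsi_holder hs0 hs1 (a + t * b) a
      rw [show a + t * b - a = t * b by ring] at key
      have habs : |t * b| ^ (r - 1) = t ^ (r - 1) * |b| ^ (r - 1) := by
        rw [abs_mul, abs_of_pos ht.1, Real.mul_rpow ht.1.le (abs_nonneg b)]
      have hbr : |b| ^ (r - 1) * |b| = |b| ^ r := by
        rw [rpow_split hb' r]; ring
      set D : ℝ := vbePsi (r - 1) (a + t * b) - vbePsi (r - 1) a with hD
      have h5 : D * b ≤ |D| * |b| := by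
        calc D * b ≤ |D * b| := le_abs_self _
          _ = |D| * |b| := abs_mul _ _
      have h6 : |D| * |b| ≤ 2 * |t * b| ^ (r - 1) * |b| :=
        mul_le_mul_of_nonneg_right key (abs_nonneg b)
      have h7 : 2 * |t * b| ^ (r - 1) * |b| = t ^ (r - 1) * (2 * |b| ^ r) := by
        rw [habs, ← hbr]; ring
      have h8 : D * b ≤ t ^ (r - 1) * (2 * |b| ^ r) := by
        rw [← h7]; exact h5.trans h6
      have h9 : r * (D * b) ≤ r * (t ^ (r - 1) * (2 * |b| ^ r)) :=
        mul_le_mul_of_nonneg_left h8 hr0.le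
      have h10 : r * vbePsi (r - 1) (a + t * b) * b - C = r * (D * b) := by
        rw [hD, hC]; ring
      linarith
  have hF1 : F 1 ≤ F 0 := hmono (Set.mem_Icc.2 ⟨le_refl 0, zero_le_one⟩)
    (Set.mem_Icc.2 ⟨zero_le_one, le_refl 1⟩) zero_le_one
  have hF0 : F 0 = |a| ^ r := by
    simp [hF, Real.zero_rpow hr0.ne']
  have hF1' : F 1 = |a + b| ^ r - C - 2 * |b| ^ r := by
    simp [hF, Real.one_rpow]
  rw [hF0, hF1'] at hF1
  rw [hC] at hF1
  linarith
lemma vbe_abs_add_rpow_le {r : ℝ} (hr0 : 0 < r) (a b : ℝ) :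
    |a + b| ^ r ≤ 2 ^ r * (|a| ^ r + |b| ^ r) := by
  rcases le_total |a| |b| with h | h
  · have h1 : |a + b| ≤ 2 * |b| := by
      calc |a + b| ≤ |a| + |b| := abs_add_le a b
        _ ≤ 2 * |b| := by linarith
    calc |a + b| ^ r ≤ (2 * |b|) ^ r :=
          Real.rpow_le_rpow (abs_nonneg _) h1 hr0.le
      _ = 2 ^ r * |b| ^ r := Real.mul_rpow (by norm_num) (abs_nonneg b)
      _ ≤ 2 ^ r * (|a| ^ r + |b| ^ r) := by
          have := Real.rpow_nonneg (abs_nonneg a) r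
          have h2 : (0:ℝ) ≤ 2 ^ r := Real.rpow_nonneg (by norm_num) r
          nlinarith
  · have h1 : |a + b| ≤ 2 * |a| := by
      calc |a + b| ≤ |a| + |b| := abs_add_le a b
        _ ≤ 2 * |a| := by linarith
    calc |a + b| ^ r ≤ (2 * |a|) ^ r :=
          Real.rpow_le_rpow (abs_nonneg _) h1 hr0.le
      _ = 2 ^ r * |a| ^ r := Real.mul_rpow (by norm_num) (abs_nonneg a)
      _ ≤ 2 ^ r * (|a| ^ r + |b| ^ r) := by
          have := Real.rpow_nonneg (abs_nonneg b) r
          have h2 : (0:ℝ) ≤ 2 ^ r := Real.rpow_nonneg (by norm_num) r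
          nlinarith

lemma vbe_step {Ω : Type*} [MeasureSpace Ω] [IsProbabilityMeasure (ℙ : Measure Ω)]
    {r : ℝ} (hr1 : 1 < r) (hr2 : r ≤ 2) {S Y : Ω → ℝ}
    (hSm : Measurable S) (hYm : Measurable Y)
    (hind : IndepFun S Y ℙ) (hSint : Integrable S) (hYint : Integrable Y)
    (hSr : Integrable (fun ω => |S ω| ^ r)) (hYr : Integrable (fun ω => |Y ω| ^ r))
    (hYmean : ∫ ω, Y ω = 0) :
    Integrable (fun ω => |S ω + Y ω| ^ r) ∧
      ∫ ω, |S ω + Y ω| ^ r ≤ (∫ ω, |S ω| ^ r) + 2 * ∫ ω, |Y ω| ^ r := by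
  have hr0 : (0 : ℝ) < r := by linarith
  have hs0 : (0 : ℝ) < r - 1 := by linarith
  have hs1 : r - 1 ≤ 1 := by linarith
  have hm : Measurable fun ω => |S ω + Y ω| ^ r :=
    ((hSm.add hYm).abs).pow measurable_const
  have hbound : Integrable (fun ω => 2 ^ r * (|S ω| ^ r + |Y ω| ^ r)) :=
    (hSr.add hYr).const_mul _
  have hInt1 : Integrable (fun ω => |S ω + Y ω| ^ r) := by
    refine hbound.mono hm.aestronglyMeasurable (ae_of_all _ fun ω => ?_)
    rw [Real.norm_eq_abs, Real.norm_eq_abs,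
      abs_of_nonneg (Real.rpow_nonneg (abs_nonneg _) r)]
    have h := vbe_abs_add_rpow_le hr0 (S ω) (Y ω)
    have h2 : (0:ℝ) ≤ 2 ^ r * (|S ω| ^ r + |Y ω| ^ r) := by positivity
    rwa [abs_of_nonneg h2]
  refine ⟨hInt1, ?_⟩
  have hpsim : Measurable fun x : ℝ => vbePsi (r - 1) x :=
    measurable_id.mul (measurable_abs.pow measurable_const)
  have hpsiS_int : Integrable (fun ω => vbePsi (r - 1) (S ω)) := by
    have hi : Integrable (fun ω => 1 + |S ω|) := (integrable_const 1).add hSint.abs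
    refine hi.mono ((hpsim.comp hSm).aestronglyMeasurable) (ae_of_all _ fun ω => ?_)
    rw [Real.norm_eq_abs, Real.norm_eq_abs, vbePsi_abs hs0]
    have h1 : |S ω| ^ (r - 1) ≤ 1 + |S ω| := by
      rcases le_total |S ω| 1 with h | h
      · have := Real.rpow_le_one (abs_nonneg _) h hs0.le
        linarith [abs_nonneg (S ω)]
      · have h2 := Real.rpow_le_rpow_of_exponent_le h hs1
        rw [Real.rpow_one] at h2
        linarith
    rwa [abs_of_nonneg (by positivity : (0:ℝ) ≤ 1 + |S ω|)]
  have hindpsi : IndepFun (fun ω => vbePsi (r - 1) (S ω)) Y ℙ :=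
    hind.comp hpsim measurable_id
  have hprod_int : Integrable (fun ω => vbePsi (r - 1) (S ω) * Y ω) :=
    hindpsi.integrable_mul hpsiS_int hYint
  have hprod_zero : ∫ ω, vbePsi (r - 1) (S ω) * Y ω = 0 := by
    have h := hindpsi.integral_mul_eq_mul_integral hpsiS_int.aestronglyMeasurable
      hYint.aestronglyMeasurable
    have h2 : (fun ω => vbePsi (r - 1) (S ω) * Y ω)
        = (fun ω => vbePsi (r - 1) (S ω)) * Y := rfl
    rw [h2, h, hYmean, mul_zero]
  set g : Ω → ℝ := fun ω => |S ω| ^ r + r * (vbePsi (r - 1) (S ω) * Y ω) + 2 * |Y ω| ^ r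
    with hg
  have hg_int1 : Integrable (fun ω => r * (vbePsi (r - 1) (S ω) * Y ω)) :=
    hprod_int.const_mul r
  have hg_int2 : Integrable (fun ω => 2 * |Y ω| ^ r) := hYr.const_mul 2
  have hg_int : Integrable g := (hSr.add hg_int1).add hg_int2
  have hle : ∫ ω, |S ω + Y ω| ^ r ≤ ∫ ω, g ω := by
    refine integral_mono_of_nonneg (ae_of_all _ fun ω => ?_) hg_int (ae_of_all _ fun ω => ?_)
    · exact Real.rpow_nonneg (abs_nonneg _) r
    · have h := vbe_pointwise hr1 hr2 (S ω) (Y ω)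
      simp only [hg]
      nlinarith [h]
  have hgval : ∫ ω, g ω = (∫ ω, |S ω| ^ r) + 2 * ∫ ω, |Y ω| ^ r := by
    rw [hg]
    have e1 : ∫ ω, (|S ω| ^ r + r * (vbePsi (r - 1) (S ω) * Y ω) + 2 * |Y ω| ^ r)
        = (∫ ω, (|S ω| ^ r + r * (vbePsi (r - 1) (S ω) * Y ω))) + ∫ ω, 2 * |Y ω| ^ r :=
      integral_add (hSr.add hg_int1) hg_int2
    have e2 : ∫ ω, (|S ω| ^ r + r * (vbePsi (r - 1) (S ω) * Y ω))
        = (∫ ω, |S ω| ^ r) + ∫ ω, r * (vbePsi (r - 1) (S ω) * Y ω) :=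
      integral_add hSr hg_int1
    rw [e1, e2, integral_const_mul, integral_const_mul, hprod_zero]
    ring
  rw [hgval] at hle
  exact hle

theorem stmt_3 {Ω : Type*} [MeasureSpace Ω] [IsProbabilityMeasure (ℙ : Measure Ω)]
    (r : ℝ) (hr1 : 1 < r) (hr2 : r ≤ 2) (n : ℕ)
    (X : ℕ → Ω → ℝ) (hmeas : ∀ j, Measurable (X j))
    (hindep : iIndepFun X ℙ)
    (hint : ∀ j, Integrable (X j))
    (hmean : ∀ j, ∫ ω, X j ω = 0)
    (hmomint : ∀ j, Integrable (fun ω => |X j ω| ^ r)) :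
    ∫ ω, |∑ j ∈ Finset.range n, X j ω| ^ r
      ≤ 2 * ∑ j ∈ Finset.range n, ∫ ω, |X j ω| ^ r := by
  have hr0 : (0 : ℝ) < r := by linarith
  have key : ∀ m : ℕ, Integrable (fun ω => |∑ j ∈ Finset.range m, X j ω| ^ r) ∧
      ∫ ω, |∑ j ∈ Finset.range m, X j ω| ^ r
        ≤ 2 * ∑ j ∈ Finset.range m, ∫ ω, |X j ω| ^ r := by
    intro m
    induction m with
    | zero =>
      constructor
      · simp [Real.zero_rpow hr0.ne']
      · simp [Real.zero_rpow hr0.ne']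
    | succ n ih =>
      obtain ⟨ihInt, ihLe⟩ := ih
      have hSm : Measurable fun ω => ∑ j ∈ Finset.range n, X j ω :=
        Finset.measurable_sum _ fun i _ => hmeas i
      have hind : IndepFun (fun ω => ∑ j ∈ Finset.range n, X j ω) (X n) ℙ := by
        have h := hindep.indepFun_sum_range_succ hmeas n
        have heq : (∑ j ∈ Finset.range n, X j) = fun ω => ∑ j ∈ Finset.range n, X j ω := by
          funext ω; simp
        rwa [heq] at h
      have hSint : Integrable (fun ω => ∑ j ∈ Finset.range n, X j ω) :=
        integrable_finset_sum _ fun i _ => hint i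
      obtain ⟨hI, hLe⟩ := vbe_step hr1 hr2 hSm (hmeas n) hind hSint (hint n)
        ihInt (hmomint n) (hmean n)
      constructor
      · have heq : (fun ω => |∑ j ∈ Finset.range (n+1), X j ω| ^ r)
            = fun ω => |(∑ j ∈ Finset.range n, X j ω) + X n ω| ^ r := by
          funext ω; rw [Finset.sum_range_succ]
        rw [heq]; exact hI
      · have heq : ∫ ω, |∑ j ∈ Finset.range (n+1), X j ω| ^ r
            = ∫ ω, |(∑ j ∈ Finset.range n, X j ω) + X n ω| ^ r := by
          congr 1; funext ω; rw [Finset.sum_range_succ]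
        rw [heq, Finset.sum_range_succ]
        have h2 : (0:ℝ) ≤ ∫ ω, |X n ω| ^ r :=
          integral_nonneg fun ω => Real.rpow_nonneg (abs_nonneg _) r
        linarith
  exact (key n).2
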